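/- Let d be a positive natural number, σ > 0, and for x ∈ ℝ^d let μ_x denote the isotropic Gaussian measure N(x, σ²I_d). Let S ⊆ ℝ^d be a measurable set, x, δ ∈ ℝ^d, and b ∈ ℝ. If μ_x(S) ≤ Φ(b), then μ_{x+δ}(S) ≤ Φ(b + ‖δ‖₂/σ). -/

import Mathlib

open MeasureTheory ProbabilityTheory Set
open scoped RealInnerProductSpace NNReal ENNReal

/-- The isotropic Gaussian measure `N(x, σ²I_d)` on `ℝ^d`. -/
noncomputable def gaussPi (d : ℕ) (σ : ℝ) (x : EuclideanSpace ℝ (Fin d)) :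
    Measure (EuclideanSpace ℝ (Fin d)) :=
  Measure.map (MeasurableEquiv.toLp 2 (Fin d → ℝ))
    (Measure.pi fun i => gaussianReal (x i) ⟨σ ^ 2, sq_nonneg σ⟩)

/-- The standard normal cumulative distribution function `Φ`. -/
noncomputable def stdNormalCDF (t : ℝ) : ℝ :=
  (gaussianReal 0 1 (Set.Iic t)).toReal

section Aux

open Real

lemma pdf_conv_pointwise (v1 v2 : ℝ≥0) (h1 : v1 ≠ 0) (h2 : v2 ≠ 0) (m1 m2 c a : ℝ) :
    gaussianPDFReal m1 v1 a * gaussianPDFReal m2 v2 (c - a) =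
      gaussianPDFReal (m1 + m2) (v1 + v2) c *
        gaussianPDFReal (m1 + v1 * (c - m1 - m2) / (v1 + v2)) (v1 * v2 / (v1 + v2)) a := by
  have hv1 : (0:ℝ) < v1 := lt_of_le_of_ne v1.coe_nonneg (by exact_mod_cast (Ne.symm h1))
  have hv2 : (0:ℝ) < v2 := lt_of_le_of_ne v2.coe_nonneg (by exact_mod_cast (Ne.symm h2))
  have hs : (0:ℝ) < (v1:ℝ) + v2 := by linarith
  simp only [gaussianPDFReal, NNReal.coe_add, NNReal.coe_mul, NNReal.coe_div]
  rw [mul_mul_mul_comm, ← Real.exp_add, mul_mul_mul_comm, ← Real.exp_add]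
  congr 1
  · rw [← mul_inv, ← mul_inv, ← Real.sqrt_mul (by positivity), ← Real.sqrt_mul (by positivity)]
    congr 2
    field_simp
  · congr 1
    field_simp
    ring

lemma lintegral_pdf_conv (v1 v2 : ℝ≥0) (h1 : v1 ≠ 0) (h2 : v2 ≠ 0) (m1 m2 c : ℝ) :
    ∫⁻ a, gaussianPDF m1 v1 a * gaussianPDF m2 v2 (c - a) =
      gaussianPDF (m1 + m2) (v1 + v2) c := by
  simp only [gaussianPDF]
  have hnn : ∀ a, 0 ≤ gaussianPDFReal m1 v1 a * gaussianPDFReal m2 v2 (c - a) :=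
    fun a => mul_nonneg (gaussianPDFReal_nonneg _ _ _) (gaussianPDFReal_nonneg _ _ _)
  simp_rw [← ENNReal.ofReal_mul (gaussianPDFReal_nonneg m1 v1 _)]
  rw [← ofReal_integral_eq_lintegral_ofReal ?_ (ae_of_all _ hnn)]
  · congr 1
    simp_rw [pdf_conv_pointwise v1 v2 h1 h2 m1 m2 c]
    rw [integral_const_mul, integral_gaussianPDFReal_eq_one, mul_one]
    simp only [ne_eq, div_eq_zero_iff, mul_eq_zero, not_or]
    exact ⟨⟨h1, h2⟩, by simp [h1, h2]⟩
  · simp_rw [pdf_conv_pointwise v1 v2 h1 h2 m1 m2 c]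
    exact (integrable_gaussianPDFReal _ _).const_mul _

lemma gaussian_conv (m1 m2 : ℝ) (v1 v2 : ℝ≥0) :
    Measure.map (fun p : ℝ × ℝ => p.1 + p.2)
      ((gaussianReal m1 v1).prod (gaussianReal m2 v2)) = gaussianReal (m1 + m2) (v1 + v2) := by
  by_cases h1 : v1 = 0
  · subst h1
    rw [gaussianReal_zero_var, Measure.dirac_prod, Measure.map_map measurable_add measurable_prodMk_left]
    have hc : ((fun p : ℝ × ℝ => p.1 + p.2) ∘ (Prod.mk m1)) = (m1 + ·) := rfl
    rw [hc, gaussianReal_map_const_add, add_comm m2 m1, zero_add]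
  by_cases h2 : v2 = 0
  · subst h2
    rw [gaussianReal_zero_var, Measure.prod_dirac, Measure.map_map measurable_add (measurable_prodMk_right)]
    have hc : ((fun p : ℝ × ℝ => p.1 + p.2) ∘ (fun a => (a, m2))) = (· + m2) := rfl
    rw [hc, gaussianReal_map_add_const, add_zero]
  have hadd : Measurable fun p : ℝ × ℝ => p.1 + p.2 := measurable_add
  have hpdf2 : Measurable (gaussianPDF m2 v2) := measurable_gaussianPDF _ _
  have hpdf1 : Measurable (gaussianPDF m1 v1) := measurable_gaussianPDF _ _
  refine Measure.ext_of_Iic _ _ (fun t => ?_)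
  have hk0 : Measurable fun q : ℝ × ℝ =>
      (Iic t).indicator (fun c => gaussianPDF m2 v2 (c - q.1)) q.2 := by
    have : Measurable fun q : ℝ × ℝ => gaussianPDF m2 v2 (q.2 - q.1) :=
      hpdf2.comp (measurable_snd.sub measurable_fst)
    exact (this.indicator (measurable_snd measurableSet_Iic))
  have hk : Measurable fun q : ℝ × ℝ => gaussianPDF m1 v1 q.1 *
      (Iic t).indicator (fun c => gaussianPDF m2 v2 (c - q.1)) q.2 :=
    (hpdf1.comp measurable_fst).mul hk0
  rw [Measure.map_apply hadd measurableSet_Iic, Measure.prod_apply (hadd measurableSet_Iic)]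
  have hsec : ∀ a : ℝ, (Prod.mk a ⁻¹' ((fun p : ℝ × ℝ => p.1 + p.2) ⁻¹' Iic t)) = Iic (t - a) := by
    intro a; ext b; simp [le_sub_iff_add_le, add_comm]
  simp_rw [hsec]
  have step1 : ∀ a : ℝ, gaussianReal m2 v2 (Iic (t - a)) =
      ∫⁻ c, (Iic t).indicator (fun c => gaussianPDF m2 v2 (c - a)) c := by
    intro a
    rw [gaussianReal_apply _ h2, ← lintegral_indicator measurableSet_Iic _]
    rw [← lintegral_add_right_eq_self (fun b => (Iic (t-a)).indicator (gaussianPDF m2 v2) b) (-a)]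
    congr 1 with c
    by_cases hc : c ≤ t
    · have h1m : c + -a ∈ Iic (t - a) := by simp only [mem_Iic]; linarith
      have h2m : c ∈ Iic t := by simpa using hc
      rw [indicator_of_mem h1m, indicator_of_mem h2m, sub_eq_add_neg]
    · have h1m : c + -a ∉ Iic (t - a) := by simp only [mem_Iic, not_le] at hc ⊢; linarith
      have h2m : c ∉ Iic t := by simpa using hc
      rw [indicator_of_notMem h1m, indicator_of_notMem h2m]
  simp_rw [step1]
  -- now integrate against μ1 = withDensity pdf1
  rw [gaussianReal_of_var_ne_zero _ h1]
  have hG : Measurable fun a : ℝ =>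
      ∫⁻ c, (Iic t).indicator (fun c => gaussianPDF m2 v2 (c - a)) c := by
    exact hk0.lintegral_prod_right'
  rw [lintegral_withDensity_eq_lintegral_mul _ hpdf1 hG]
  simp only [Pi.mul_apply]
  have hmul : ∀ a : ℝ, gaussianPDF m1 v1 a *
      ∫⁻ c, (Iic t).indicator (fun c => gaussianPDF m2 v2 (c - a)) c =
      ∫⁻ c, gaussianPDF m1 v1 a * (Iic t).indicator (fun c => gaussianPDF m2 v2 (c - a)) c :=
    fun a => (lintegral_const_mul _ (hk0.comp measurable_prodMk_left)).symm
  simp_rw [hmul]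
  rw [lintegral_lintegral_swap hk.aemeasurable]
  have hinner : ∀ c : ℝ,
      (∫⁻ a, gaussianPDF m1 v1 a * (Iic t).indicator (fun c' => gaussianPDF m2 v2 (c' - a)) c) =
      (Iic t).indicator (gaussianPDF (m1 + m2) (v1 + v2)) c := by
    intro c
    by_cases hc : c ∈ Iic t
    · simp only [indicator_of_mem hc]
      exact lintegral_pdf_conv v1 v2 h1 h2 m1 m2 c
    · simp [indicator_of_notMem hc]
  simp_rw [hinner]
  rw [lintegral_indicator measurableSet_Iic _, ← gaussianReal_apply _ (by simp [h1])]

lemma measurable_wsum {n : ℕ} (a : Fin n → ℝ) :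
    Measurable fun z : Fin n → ℝ => ∑ i, a i * z i :=
  Finset.measurable_sum _ fun i _ => by fun_prop

lemma gaussian_pi_wsum (n : ℕ) (a m : Fin n → ℝ) (v : ℝ≥0) :
    Measure.map (fun z : Fin n → ℝ => ∑ i, a i * z i)
        (Measure.pi fun i => gaussianReal (m i) v) =
      gaussianReal (∑ i, a i * m i) ((∑ i, (a i) ^ 2).toNNReal * v) := by
  induction n with
  | zero =>
      simp only [Finset.univ_eq_empty, Finset.sum_empty]
      rw [show (fun _ : Fin 0 → ℝ => (0:ℝ)) = fun _ => (0:ℝ) from rfl]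
      rw [Measure.map_const]
      simp [Real.toNNReal_zero]
  | succ n ih =>
      have hmp := measurePreserving_piFinSuccAbove (fun i : Fin (n+1) => gaussianReal (m i) v) 0
      set e := MeasurableEquiv.piFinSuccAbove (fun _ : Fin (n+1) => ℝ) 0 with he
      have hpi : (Measure.pi fun i => gaussianReal (m i) v) =
          Measure.map e.symm ((gaussianReal (m 0) v).prod
            (Measure.pi fun j : Fin n => gaussianReal (m ((0 : Fin (n+1)).succAbove j)) v)) :=
        (hmp.symm e).map_eq.symm
      rw [hpi, Measure.map_map (measurable_wsum a) e.symm.measurable]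
      have hcomp : ((fun z : Fin (n+1) → ℝ => ∑ i, a i * z i) ∘ e.symm) =
          (fun q : ℝ × ℝ => q.1 + q.2) ∘
            (Prod.map (fun y : ℝ => a 0 * y) (fun z : Fin n → ℝ => ∑ i, a i.succ * z i)) := by
        ext p
        simp only [Function.comp_apply, Prod.map_apply]
        rw [Fin.sum_univ_succ]
        simp [e, MeasurableEquiv.piFinSuccAbove_symm_apply, Fin.zero_succAbove]
      rw [hcomp, ← Measure.map_map measurable_add
        (Measurable.prodMap (by fun_prop : Measurable fun y : ℝ => a 0 * y) (measurable_wsum _))]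
      rw [← Measure.map_prod_map _ _ (by fun_prop : Measurable fun y : ℝ => a 0 * y) (measurable_wsum _)]
      simp_rw [Fin.zero_succAbove]
      rw [ih (fun i => a i.succ) (fun i => m i.succ), gaussianReal_map_const_mul,
        gaussian_conv]
      congr 1
      · rw [Fin.sum_univ_succ]
      · have h1 : ((∑ i : Fin n, a i.succ ^ 2).toNNReal : ℝ) = ∑ i : Fin n, a i.succ ^ 2 :=
          Real.coe_toNNReal _ (Finset.sum_nonneg fun i _ => sq_nonneg _)
        have h2 : ((∑ i : Fin (n+1), a i ^ 2).toNNReal : ℝ) = ∑ i : Fin (n+1), a i ^ 2 :=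
          Real.coe_toNNReal _ (Finset.sum_nonneg fun i _ => sq_nonneg _)
        apply NNReal.coe_injective
        simp only [NNReal.coe_mul, NNReal.coe_add, h1, h2, NNReal.coe_mk]
        rw [Fin.sum_univ_succ]
        ring

lemma measurable_shiftDensity (m c : ℝ) (v : ℝ≥0) :
    Measurable fun z : ℝ => ENNReal.ofReal (Real.exp ((z - m) * c / v - c ^ 2 / (2 * v))) := by
  fun_prop

lemma gauss_shift_1d (m c : ℝ) {v : ℝ≥0} (hv : v ≠ 0) :
    gaussianReal (m + c) v = (gaussianReal m v).withDensity
      (fun z => ENNReal.ofReal (Real.exp ((z - m) * c / v - c ^ 2 / (2 * v)))) := by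
  have hvpos : (0:ℝ) < v := lt_of_le_of_ne v.coe_nonneg (by exact_mod_cast (Ne.symm hv))
  rw [gaussianReal_of_var_ne_zero _ hv, gaussianReal_of_var_ne_zero _ hv,
    ← withDensity_mul _ (measurable_gaussianPDF _ _) (measurable_shiftDensity m c v)]
  congr 1
  ext z
  simp only [Pi.mul_apply, gaussianPDF]
  rw [← ENNReal.ofReal_mul (gaussianPDFReal_nonneg _ _ _)]
  congr 1
  simp only [gaussianPDFReal]
  have hexp : rexp (-(z - (m + c)) ^ 2 / (2 * v)) =
      rexp (-(z - m) ^ 2 / (2 * v)) * rexp ((z - m) * c / v - c ^ 2 / (2 * v)) := by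
    rw [← Real.exp_add]
    congr 1
    field_simp
    ring
  rw [hexp]
  ring

lemma prod_withDensity_eq {α β : Type*} [MeasurableSpace α] [MeasurableSpace β]
    (μ₁ : Measure α) (ν₁ : Measure β) (μ₂ : Measure α) (ν₂ : Measure β)
    [SigmaFinite μ₁] [SigmaFinite ν₁] [SigmaFinite μ₂] [SigmaFinite ν₂]
    {f : α → ℝ≥0∞} {g : β → ℝ≥0∞} (hf : Measurable f) (hg : Measurable g)
    (h1 : μ₂ = μ₁.withDensity f) (h2 : ν₂ = ν₁.withDensity g) :
    μ₂.prod ν₂ = (μ₁.prod ν₁).withDensity fun p => f p.1 * g p.2 := by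
  refine Measure.prod_eq fun s t hs ht => ?_
  rw [withDensity_apply _ (hs.prod ht), ← Measure.prod_restrict,
    lintegral_prod_mul hf.aemeasurable hg.aemeasurable, h1, h2,
    withDensity_apply _ hs, withDensity_apply _ ht]

lemma map_equiv_withDensity {α β : Type*} [MeasurableSpace α] [MeasurableSpace β]
    (e : α ≃ᵐ β) (ρ : Measure α) (F : α → ℝ≥0∞) (hF : Measurable F) :
    Measure.map e (ρ.withDensity F) = (Measure.map e ρ).withDensity (F ∘ e.symm) := by
  ext s hs
  rw [Measure.map_apply e.measurable hs, withDensity_apply _ hs,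
    withDensity_apply _ (e.measurable hs),
    setLIntegral_map hs (hF.comp e.symm.measurable) e.measurable]
  refine setLIntegral_congr_fun (e.measurable hs) (fun x _ => ?_)
  simp

lemma measurable_piShiftDensity (n : ℕ) (m c : Fin n → ℝ) (v : ℝ≥0) :
    Measurable fun z : Fin n → ℝ =>
      ENNReal.ofReal (Real.exp (∑ i, ((z i - m i) * c i / v - c i ^ 2 / (2 * v)))) := by
  apply Measurable.ennreal_ofReal
  apply Real.measurable_exp.comp
  apply Finset.measurable_sum
  intro i _
  exact ((((measurable_pi_apply i).sub_const _).mul_const _).div_const _).sub_const _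

lemma pi_gauss_shift (n : ℕ) (m c : Fin n → ℝ) {v : ℝ≥0} (hv : v ≠ 0) :
    Measure.pi (fun i => gaussianReal (m i + c i) v) =
      (Measure.pi fun i => gaussianReal (m i) v).withDensity
        (fun z => ENNReal.ofReal (Real.exp (∑ i, ((z i - m i) * c i / v - c i ^ 2 / (2 * v))))) := by
  induction n with
  | zero =>
      have h0 : (fun i : Fin 0 => gaussianReal (m i + c i) v) = fun i => gaussianReal (m i) v := by
        funext i; exact i.elim0
      rw [h0]
      have h1 : (fun z : Fin 0 → ℝ =>
          ENNReal.ofReal (Real.exp (∑ i, ((z i - m i) * c i / v - c i ^ 2 / (2 * v))))) =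
          (1 : (Fin 0 → ℝ) → ℝ≥0∞) := by
        funext z
        simp
      rw [h1, withDensity_one]
  | succ n ih =>
      set e := MeasurableEquiv.piFinSuccAbove (fun _ : Fin (n+1) => ℝ) 0 with he
      have hmpL := measurePreserving_piFinSuccAbove
        (fun i : Fin (n+1) => gaussianReal (m i + c i) v) 0
      have hmpR := measurePreserving_piFinSuccAbove
        (fun i : Fin (n+1) => gaussianReal (m i) v) 0
      have hpiL : (Measure.pi fun i : Fin (n+1) => gaussianReal (m i + c i) v) =
          Measure.map e.symm ((gaussianReal (m 0 + c 0) v).prod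
            (Measure.pi fun j : Fin n => gaussianReal (m j.succ + c j.succ) v)) := by
        have := (hmpL.symm e).map_eq.symm
        simpa [Fin.zero_succAbove] using this
      have hpiR : Measure.map e.symm ((gaussianReal (m 0) v).prod
            (Measure.pi fun j : Fin n => gaussianReal (m j.succ) v)) =
          (Measure.pi fun i : Fin (n+1) => gaussianReal (m i) v) := by
        have := (hmpR.symm e).map_eq
        simpa [Fin.zero_succAbove] using this
      have hprod := prod_withDensity_eq (gaussianReal (m 0) v)
        (Measure.pi fun j : Fin n => gaussianReal (m j.succ) v)
        (gaussianReal (m 0 + c 0) v)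
        (Measure.pi fun j : Fin n => gaussianReal (m j.succ + c j.succ) v)
        (measurable_shiftDensity (m 0) (c 0) v)
        (measurable_piShiftDensity n (fun j => m j.succ) (fun j => c j.succ) v)
        (gauss_shift_1d _ _ hv) (ih (fun j => m j.succ) (fun j => c j.succ))
      have hF : Measurable fun p : ℝ × (Fin n → ℝ) =>
          ENNReal.ofReal (Real.exp ((p.1 - m 0) * c 0 / v - c 0 ^ 2 / (2 * v))) *
            ENNReal.ofReal (Real.exp
              (∑ i, ((p.2 i - m i.succ) * c i.succ / v - c i.succ ^ 2 / (2 * v)))) :=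
        ((measurable_shiftDensity (m 0) (c 0) v).comp measurable_fst).mul
          ((measurable_piShiftDensity n (fun j => m j.succ) (fun j => c j.succ) v).comp
            measurable_snd)
      rw [hpiL, hprod, map_equiv_withDensity e.symm _ _ hF, hpiR]
      congr 1
      funext z
      have hez : e z = (z 0, fun j => z j.succ) := by
        simp only [he, MeasurableEquiv.piFinSuccAbove_apply, Fin.zero_succAbove]
        rfl
      simp only [Function.comp_apply, MeasurableEquiv.symm_symm, hez]
      rw [← ENNReal.ofReal_mul (le_of_lt (Real.exp_pos _)), ← Real.exp_add,
        Fin.sum_univ_succ]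

lemma gauss_symm (a : ℝ) : gaussianReal 0 1 (Ici (-a)) = gaussianReal 0 1 (Iic a) := by
  have hneg : Measure.map (fun y : ℝ => -1 * y) (gaussianReal 0 1) = gaussianReal 0 1 := by
    rw [gaussianReal_map_const_mul]
    norm_num
  conv_rhs => rw [← hneg]
  rw [Measure.map_apply (measurable_id'.const_mul _) measurableSet_Iic]
  congr 1
  ext y
  simp only [mem_preimage, mem_Iic, mem_Ici, neg_mul, one_mul]
  constructor <;> intro <;> linarith

lemma gauss_affine (μ : ℝ) {w : ℝ≥0} (hw : w ≠ 0) :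
    gaussianReal μ w =
      Measure.map (fun y => Real.sqrt w * y + μ) (gaussianReal 0 1) := by
  have h1 : Measure.map (fun y : ℝ => Real.sqrt w * y) (gaussianReal 0 1) =
      gaussianReal 0 w := by
    rw [gaussianReal_map_const_mul, mul_zero]
    congr 1
    apply NNReal.coe_injective
    push_cast
    rw [mul_one]
    exact Real.sq_sqrt w.coe_nonneg
  have h2 : Measure.map (fun y : ℝ => y + μ)
      (Measure.map (fun y : ℝ => Real.sqrt w * y) (gaussianReal 0 1)) =
      Measure.map (fun y => Real.sqrt w * y + μ) (gaussianReal 0 1) := by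
    rw [Measure.map_map (measurable_id'.add_const μ) (measurable_id'.const_mul _)]
    rfl
  rw [← h2, h1, gaussianReal_map_add_const, zero_add]

lemma gauss_Ici (μ s : ℝ) {w : ℝ≥0} (hw : w ≠ 0) :
    gaussianReal μ w (Ici (μ - s)) = gaussianReal 0 1 (Iic (s / Real.sqrt w)) := by
  have hsw : (0:ℝ) < Real.sqrt w := by
    rw [Real.sqrt_pos]
    exact lt_of_le_of_ne w.coe_nonneg (by exact_mod_cast (Ne.symm hw))
  rw [gauss_affine μ hw, Measure.map_apply (by fun_prop) measurableSet_Ici]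
  have hset : (fun y => Real.sqrt w * y + μ) ⁻¹' (Ici (μ - s)) = Ici (-(s / Real.sqrt w)) := by
    ext y
    simp only [mem_preimage, mem_Ici]
    rw [← neg_div, div_le_iff₀ hsw]
    constructor <;> intro h <;> nlinarith
  rw [hset]
  exact gauss_symm _

end Aux

theorem gaussian_shift_upper_bound
    (d : ℕ) (hd : 0 < d) (σ : ℝ) (hσ : 0 < σ)
    (S : Set (EuclideanSpace ℝ (Fin d))) (hS : MeasurableSet S)
    (x δ : EuclideanSpace ℝ (Fin d)) (b : ℝ)
    (h : (gaussPi d σ x S).toReal ≤ stdNormalCDF b) :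
    (gaussPi d σ (x + δ) S).toReal ≤ stdNormalCDF (b + ‖δ‖ / σ) := by
  by_cases hδ : δ = 0
  · subst hδ
    simpa using h
  set v : ℝ≥0 := ⟨σ ^ 2, sq_nonneg σ⟩ with hv_def
  have hvr : (v : ℝ) = σ ^ 2 := rfl
  have hσ2 : (0:ℝ) < σ ^ 2 := by positivity
  have hv : v ≠ 0 := by
    intro h0
    have : (v:ℝ) = 0 := by rw [h0, NNReal.coe_zero]
    rw [hvr] at this
    exact absurd this (ne_of_gt hσ2)
  set e := MeasurableEquiv.toLp 2 (Fin d → ℝ) with he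
  set S' : Set (Fin d → ℝ) := ⇑e ⁻¹' S with hS'def
  have hS'm : MeasurableSet S' := e.measurable hS
  have happ : ∀ y : EuclideanSpace ℝ (Fin d),
      gaussPi d σ y S = (Measure.pi fun i => gaussianReal (y i) v) S' := by
    intro y
    rw [gaussPi, Measure.map_apply e.measurable hS]
  set P : Measure (Fin d → ℝ) := Measure.pi fun i => gaussianReal (x i) v with hP
  set Q : Measure (Fin d → ℝ) := Measure.pi fun i => gaussianReal ((x + δ) i) v with hQdef
  set L : (Fin d → ℝ) → ℝ≥0∞ := fun z =>
    ENNReal.ofReal (Real.exp (∑ i, ((z i - x i) * δ i / v - δ i ^ 2 / (2 * v)))) with hLdef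
  have hQ : Q = P.withDensity L := by
    rw [hQdef, hP, hLdef]
    exact pi_gauss_shift d (fun i => x i) (fun i => δ i) hv
  -- geometry
  set r : ℝ := ‖δ‖ with hrdef
  have hr : 0 < r := norm_pos_iff.mpr hδ
  have hsum : ∑ i, δ i ^ 2 = r ^ 2 := by
    rw [hrdef, EuclideanSpace.norm_eq, Real.sq_sqrt]
    · exact Finset.sum_congr rfl fun i _ => by rw [Real.norm_eq_abs, sq_abs]
    · exact Finset.sum_nonneg fun i _ => sq_nonneg _
  set M : ℝ := ∑ i, δ i * x i with hMdef
  set w : ℝ≥0 := (∑ i, δ i ^ 2).toNNReal * v with hwdef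
  have hwr : (w : ℝ) = r ^ 2 * σ ^ 2 := by
    rw [hwdef]
    push_cast
    rw [Real.coe_toNNReal _ (Finset.sum_nonneg fun i _ => sq_nonneg _), hsum, hvr]
  have hw : w ≠ 0 := by
    intro h0
    have : (w:ℝ) = 0 := by rw [h0, NNReal.coe_zero]
    rw [hwr] at this
    have hpos : 0 < r ^ 2 * σ ^ 2 := by positivity
    linarith
  have hsqw : Real.sqrt w = r * σ := by
    rw [hwr, ← mul_pow, Real.sqrt_sq (by positivity)]
  set W : (Fin d → ℝ) → ℝ := fun z => ∑ i, δ i * z i with hWdef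
  have hWm : Measurable W := measurable_wsum _
  have hlawP : Measure.map W P = gaussianReal M w := by
    rw [hP, hWdef, hMdef, hwdef]
    exact gaussian_pi_wsum d (fun i => δ i) (fun i => x i) v
  have hlawQ : Measure.map W Q = gaussianReal (M + r ^ 2) w := by
    rw [hQdef, hWdef, hwdef]
    have := gaussian_pi_wsum d (fun i => δ i) (fun i => (x + δ) i) v
    rw [this]
    congr 1
    have hxd : ∀ i, (x + δ) i = x i + δ i := fun i => rfl
    simp_rw [hxd, mul_add, ← pow_two]
    rw [Finset.sum_add_distrib, hsum, hMdef]
  set t₀ : ℝ := M - b * r * σ with ht₀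
  set H : Set (Fin d → ℝ) := W ⁻¹' Ici t₀ with hHdef
  have hHm : MeasurableSet H := hWm measurableSet_Ici
  have hPH : P H = gaussianReal 0 1 (Iic b) := by
    rw [hHdef, ← Measure.map_apply hWm measurableSet_Ici, hlawP, ht₀,
      gauss_Ici M (b * r * σ) hw, hsqw]
    rw [show b * r * σ / (r * σ) = b by
      rw [mul_assoc, mul_div_assoc, div_self (by positivity), mul_one]]
  have hQH : Q H = gaussianReal 0 1 (Iic (b + r / σ)) := by
    rw [hHdef, ← Measure.map_apply hWm measurableSet_Ici, hlawQ]
    have ht : t₀ = (M + r ^ 2) - (b * r * σ + r ^ 2) := by rw [ht₀]; ring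
    rw [ht, gauss_Ici (M + r ^ 2) (b * r * σ + r ^ 2) hw, hsqw]
    have hrσ : (r * σ) ≠ 0 := by positivity
    rw [show (b * r * σ + r ^ 2) / (r * σ) = b + r / σ by
      rw [div_eq_iff hrσ]
      field_simp]
  -- likelihood ratio bounds
  set c : ℝ≥0∞ := ENNReal.ofReal (Real.exp ((-(b * r * σ)) / σ ^ 2 - r ^ 2 / (2 * σ ^ 2)))
    with hcdef
  have hsumeq : ∀ z : Fin d → ℝ,
      ∑ i, ((z i - x i) * δ i / (v:ℝ) - δ i ^ 2 / (2 * (v:ℝ))) =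
        ((∑ i, δ i * z i) - M) / σ ^ 2 - r ^ 2 / (2 * σ ^ 2) := by
    intro z
    simp only [hvr]
    rw [Finset.sum_sub_distrib, ← Finset.sum_div, ← Finset.sum_div, ← hsum, hMdef]
    congr 2
    rw [← Finset.sum_sub_distrib]
    exact Finset.sum_congr rfl fun i _ => by ring
  have hLform : ∀ z, L z =
      ENNReal.ofReal (Real.exp ((W z - M) / σ ^ 2 - r ^ 2 / (2 * σ ^ 2))) := by
    intro z
    simp only [hLdef]
    rw [hsumeq z]
  have hLH : ∀ z ∈ H, c ≤ L z := by
    intro z hz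
    rw [hHdef, mem_preimage, mem_Ici, ht₀] at hz
    rw [hLform z, hcdef]
    apply ENNReal.ofReal_le_ofReal
    apply Real.exp_le_exp.mpr
    have h1 : -(b * r * σ) ≤ W z - M := by linarith
    have h2 : (-(b * r * σ)) / σ ^ 2 ≤ (W z - M) / σ ^ 2 := by gcongr
    linarith
  have hLHc : ∀ z ∉ H, L z ≤ c := by
    intro z hz
    rw [hHdef, mem_preimage, mem_Ici, not_le, ht₀] at hz
    rw [hLform z, hcdef]
    apply ENNReal.ofReal_le_ofReal
    apply Real.exp_le_exp.mpr
    have h1 : W z - M ≤ -(b * r * σ) := by linarith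
    have h2 : (W z - M) / σ ^ 2 ≤ (-(b * r * σ)) / σ ^ 2 := by gcongr
    linarith
  -- measure comparison
  have hPS'H : P S' ≤ P H := by
    have h1 : (P S').toReal ≤ (P H).toReal := by
      rw [hPH]
      calc (P S').toReal = (gaussPi d σ x S).toReal := by rw [happ x]
        _ ≤ stdNormalCDF b := h
        _ = (gaussianReal 0 1 (Iic b)).toReal := rfl
    exact (ENNReal.toReal_le_toReal (measure_ne_top _ _) (measure_ne_top _ _)).mp h1
  have hdiff : P (S' \ H) ≤ P (H \ S') := by
    have e1 : P (S' ∩ H) + P (S' \ H) = P S' := measure_inter_add_diff S' hHm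
    have e2 : P (H ∩ S') + P (H \ S') = P H := measure_inter_add_diff H hS'm
    rw [inter_comm] at e2
    have : P (S' ∩ H) + P (S' \ H) ≤ P (S' ∩ H) + P (H \ S') := by
      rw [e1, e2]; exact hPS'H
    exact (ENNReal.add_le_add_iff_left (measure_ne_top _ _)).mp this
  have hLmeas : Measurable L := by
    rw [hLdef]
    exact measurable_piShiftDensity d (fun i => x i) (fun i => δ i) v
  have hQS : Q S' ≤ Q H := by
    have q1 : Q (S' ∩ H) + Q (S' \ H) = Q S' := measure_inter_add_diff S' hHm
    have q2 : Q (H ∩ S') + Q (H \ S') = Q H := measure_inter_add_diff H hS'm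
    rw [inter_comm] at q2
    have step1 : Q (S' \ H) ≤ c * P (S' \ H) := by
      rw [hQ, withDensity_apply _ (hS'm.diff hHm)]
      calc ∫⁻ z in S' \ H, L z ∂P ≤ ∫⁻ _ in S' \ H, c ∂P := by
            refine setLIntegral_mono' (hS'm.diff hHm) fun z hz => hLHc z hz.2
        _ = c * P (S' \ H) := setLIntegral_const _ _
    have step2 : c * P (H \ S') ≤ Q (H \ S') := by
      rw [hQ, withDensity_apply _ (hHm.diff hS'm)]
      calc c * P (H \ S') = ∫⁻ _ in H \ S', c ∂P := (setLIntegral_const _ _).symm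
        _ ≤ ∫⁻ z in H \ S', L z ∂P := by
            refine setLIntegral_mono' (hHm.diff hS'm) fun z hz => hLH z hz.1
    calc Q S' = Q (S' ∩ H) + Q (S' \ H) := q1.symm
      _ ≤ Q (S' ∩ H) + c * P (S' \ H) := by gcongr
      _ ≤ Q (S' ∩ H) + c * P (H \ S') := by gcongr
      _ ≤ Q (S' ∩ H) + Q (H \ S') := by gcongr
      _ = Q H := q2
  calc (gaussPi d σ (x + δ) S).toReal = (Q S').toReal := by rw [happ (x + δ)]
    _ ≤ (Q H).toReal := ENNReal.toReal_mono (measure_ne_top _ _) hQS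
    _ = stdNormalCDF (b + r / σ) := by rw [hQH]; rfl
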